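/- arXiv:2401.04833 — 4 statements merged into one kernel-verified Lean document; each statement's English description precedes it below -/
import Mathlib

section
/- Let W be a finite Weyl group acting on the real vector space V spanned by the root system Δ, and let γ₁, …, γ_d ∈ Δ be roots. Then dim Ker(s_{γ₁}⋯s_{γ_d} + 1) = d if and only if the roots γ₁, …, γ_d are pairwise orthogonal. -/
set_option linter.unusedSectionVars false

open scoped RealInnerProductSpace
open Module

variable {V : Type*} [NormedAddCommGroup V] [InnerProductSpace ℝ V] [FiniteDimensional ℝ V]

/-- The reflection in the hyperplane orthogonal to `γ` (the identity if `γ = 0`). -/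
noncomputable def srefl (γ : V) : V →ₗ[ℝ] V :=
  LinearMap.id - (LinearMap.toSpanSingleton ℝ V ((2 / ⟪γ, γ⟫) • γ)).comp (innerSL ℝ γ).toLinearMap

lemma srefl_apply (γ x : V) : srefl γ x = x - (2 * ⟪γ, x⟫ / ⟪γ, γ⟫) • γ := by
  simp [srefl, LinearMap.toSpanSingleton, smul_smul]
  ring_nf

lemma srefl_involutive (γ : V) : Function.Involutive (srefl γ) := by
  intro x
  rcases eq_or_ne γ 0 with h | h
  · simp [srefl_apply, h]
  · have hγ : ⟪γ, γ⟫ ≠ 0 := fun hc => h (inner_self_eq_zero.mp hc)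
    rw [srefl_apply, srefl_apply, inner_sub_right, real_inner_smul_right]
    field_simp
    ring_nf
    module

/-- The reflection in `γ` as a linear automorphism of `V`. -/
noncomputable def sref (γ : V) : V ≃ₗ[ℝ] V :=
  { srefl γ with
    invFun := srefl γ
    left_inv := srefl_involutive γ
    right_inv := srefl_involutive γ }

/-- A finite reduced crystallographic root system spanning `V`. -/
structure IsRootSystem (Δ : Set V) : Prop where
  finite : Δ.Finite
  nonzero : (0 : V) ∉ Δ
  span_top : Submodule.span ℝ Δ = ⊤
  refl_mem : ∀ γ ∈ Δ, ∀ β ∈ Δ, sref γ β ∈ Δ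
  crystallographic : ∀ γ ∈ Δ, ∀ β ∈ Δ, ∃ m : ℤ, 2 * ⟪β, γ⟫ / ⟪γ, γ⟫ = (m : ℝ)
  reduced : ∀ γ ∈ Δ, ∀ t : ℝ, t • γ ∈ Δ → t = 1 ∨ t = -1

/-- The Weyl group: the subgroup of `GL(V)` generated by the reflections in the roots. -/
def weylGroup (Δ : Set V) : Subgroup (V ≃ₗ[ℝ] V) :=
  Subgroup.closure {g | ∃ γ ∈ Δ, g = sref γ}

/-- The reflection length of `w`: the least number of reflections in roots whose
product is `w`. -/
noncomputable def reflLength (Δ : Set V) (w : V ≃ₗ[ℝ] V) : ℕ :=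
  sInf {r | ∃ γ : Fin r → V, (∀ i, γ i ∈ Δ) ∧ w = (List.ofFn fun i => sref (γ i)).prod}

/-- A base (system of simple roots `α` with positive roots `Pos`) for the root system `Δ`. -/
structure IsBase (Δ Pos : Set V) {n : ℕ} (α : Fin n → V) : Prop where
  pos_subset : Pos ⊆ Δ
  simple_mem : ∀ i, α i ∈ Pos
  mem_or_neg : ∀ γ ∈ Δ, γ ∈ Pos ∨ -γ ∈ Pos
  not_neg : ∀ γ ∈ Pos, -γ ∉ Pos
  pos_combo : ∀ γ ∈ Pos, ∃ c : Fin n → ℕ, γ = ∑ j, (c j : ℝ) • α j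

/-- `l` is a word (in the simple reflections) for `w`. -/
def IsWord {n : ℕ} (α : Fin n → V) (l : List (Fin n)) (w : V ≃ₗ[ℝ] V) : Prop :=
  (l.map fun j => sref (α j)).prod = w

/-- The Coxeter length of `w` with respect to the simple system `α`. -/
noncomputable def len {n : ℕ} (α : Fin n → V) (w : V ≃ₗ[ℝ] V) : ℕ :=
  sInf {r | ∃ l : List (Fin n), IsWord α l w ∧ l.length = r}

/-- Bruhat order: `v ≤ w` iff some reduced word for `w` has a subword with value `v`. -/
def bruhatLE {n : ℕ} (α : Fin n → V) (v w : V ≃ₗ[ℝ] V) : Prop :=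
  ∃ l : List (Fin n), IsWord α l w ∧ l.length = len α w ∧
    ∃ l' : List (Fin n), l'.Sublist l ∧ IsWord α l' v

/-- The product of the simple reflections indexed by a word given as a function
`i : Fin m → Fin n`, along a list of positions. -/
noncomputable def fwordProd {n m : ℕ} (α : Fin n → V) (i : Fin m → Fin n)
    (l : List (Fin m)) : V ≃ₗ[ℝ] V :=
  (l.map fun j => sref (α (i j))).prod

/-- The full product `s_{i₁} ⋯ s_{i_m}`. -/
noncomputable def fullProd {n m : ℕ} (α : Fin n → V) (i : Fin m → Fin n) : V ≃ₗ[ℝ] V :=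
  fwordProd α i (List.finRange m)

/-- The root `β_k = s_{i₁} ⋯ s_{i_{k-1}} (α_{i_k})` associated to the `k`-th position
of the word `i` (positions indexed from `0`). -/
noncomputable def betaRoot {n m : ℕ} (α : Fin n → V) (i : Fin m → Fin n) (k : Fin m) : V :=
  fwordProd α i ((List.finRange m).take k) (α (i k))

/-- The value of the subword of `i` obtained by deleting the positions `p t`. -/
noncomputable def complProd {n m d : ℕ} (α : Fin n → V) (i : Fin m → Fin n)
    (p : Fin d → Fin m) : V ≃ₗ[ℝ] V :=
  fwordProd α i ((List.finRange m).filter fun j => ∀ t, p t ≠ j)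



lemma sref_apply (γ x : V) : sref γ x = x - (2 * ⟪γ, x⟫ / ⟪γ, γ⟫) • γ := srefl_apply γ x

lemma sref_apply_of_inner_eq_zero (γ x : V) (h : ⟪γ, x⟫ = 0) : sref γ x = x := by
  simp [sref_apply, h]

lemma sref_apply_self (γ : V) (h : γ ≠ 0) : sref γ γ = -γ := by
  have hγ : ⟪γ, γ⟫ ≠ 0 := fun hc => h (inner_self_eq_zero.mp hc)
  rw [sref_apply]
  field_simp
  module

/-- The product of reflections moves any vector by an element of the span of the roots. -/
lemma prod_sub_mem_span : ∀ {d : ℕ} (γ : Fin d → V) (x : V),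
    ((List.ofFn fun i => sref (γ i)).prod : V ≃ₗ[ℝ] V) x - x ∈
      Submodule.span ℝ (Set.range γ) := by
  intro d
  induction d with
  | zero => intro γ x; simp
  | succ n ih =>
    intro γ x
    rw [List.ofFn_succ, List.prod_cons]
    have h1 : ((List.ofFn fun i => sref (γ i.succ)).prod : V ≃ₗ[ℝ] V) x - x ∈
        Submodule.span ℝ (Set.range γ) := by
      refine Submodule.span_mono ?_ (ih (fun i => γ i.succ) x)
      rintro - ⟨i, rfl⟩; exact ⟨i.succ, rfl⟩
    set y := ((List.ofFn fun i => sref (γ i.succ)).prod : V ≃ₗ[ℝ] V) x with hy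
    have h2 : sref (γ 0) y - y ∈ Submodule.span ℝ (Set.range γ) := by
      have heq : sref (γ 0) y - y = -((2 * ⟪γ 0, y⟫ / ⟪γ 0, γ 0⟫) • γ 0) := by
        rw [sref_apply]; abel
      rw [heq]
      exact Submodule.neg_mem _ (Submodule.smul_mem _ _
        (Submodule.subset_span (Set.mem_range_self 0)))
    have : ((sref (γ 0) * (List.ofFn fun i => sref (γ i.succ)).prod : V ≃ₗ[ℝ] V)) x - x
        = (sref (γ 0) y - y) + (y - x) := by
      show sref (γ 0) y - x = _
      abel
    rw [this]
    exact Submodule.add_mem _ h2 h1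

lemma prod_map_sref_fix (l : List V) (x : V) (h : ∀ v ∈ l, ⟪v, x⟫ = 0) :
    ((l.map sref).prod : V ≃ₗ[ℝ] V) x = x := by
  induction l with
  | nil => simp
  | cons a t ih =>
    rw [List.map_cons, List.prod_cons]
    show sref a (((t.map sref).prod : V ≃ₗ[ℝ] V) x) = x
    rw [ih (fun v hv => h v (List.mem_cons_of_mem a hv)),
      sref_apply_of_inner_eq_zero a x (h a List.mem_cons_self)]

lemma prod_map_sref_neg (l : List V) (hl : l.Pairwise fun a b => ⟪a, b⟫ = 0)
    (h0 : ∀ v ∈ l, v ≠ 0) (v : V) (hv : v ∈ l) :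
    ((l.map sref).prod : V ≃ₗ[ℝ] V) v = -v := by
  induction l with
  | nil => simp at hv
  | cons a t ih =>
    rw [List.pairwise_cons] at hl
    rw [List.map_cons, List.prod_cons]
    show sref a (((t.map sref).prod : V ≃ₗ[ℝ] V) v) = -v
    rcases List.mem_cons.mp hv with rfl | hvt
    · rw [prod_map_sref_fix t v fun b hb => by
        rw [real_inner_comm]; exact hl.1 b hb]
      exact sref_apply_self v (h0 v hv)
    · rw [ih hl.2 (fun b hb => h0 b (List.mem_cons_of_mem a hb)) hvt, map_neg,
        sref_apply_of_inner_eq_zero a v (hl.1 v hvt)]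

lemma key_forward : ∀ {d : ℕ} (γ : Fin d → V), (∀ i, γ i ≠ 0) →
    (∀ x ∈ Submodule.span ℝ (Set.range γ),
      ((List.ofFn fun i => sref (γ i)).prod : V ≃ₗ[ℝ] V) x = -x) →
    LinearIndependent ℝ γ →
    ∀ i j, i ≠ j → ⟪γ i, γ j⟫ = 0 := by
  intro d
  induction d with
  | zero => intro γ _ _ _ i; exact i.elim0
  | succ n ih =>
    intro γ h0 hneg hind
    set g := γ (Fin.last n) with hg
    set γ' : Fin n → V := fun i => γ i.castSucc with hγ'
    set w' : V ≃ₗ[ℝ] V := (List.ofFn fun i : Fin n => sref (γ' i)).prod with hw'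
    have hw : (List.ofFn fun i => sref (γ i)).prod = w' * sref g := by
      rw [hw', ← List.prod_concat, ← List.ofFn_succ' (fun i => sref (γ i))]
    set U := Submodule.span ℝ (Set.range γ) with hU
    set U' := Submodule.span ℝ (Set.range γ') with hU'
    have hU'le : U' ≤ U := Submodule.span_mono (by rintro - ⟨i, rfl⟩; exact ⟨i.castSucc, rfl⟩)
    have step1 : ∀ x ∈ U, ⟪g, x⟫ = 0 → w' x = -x := by
      intro x hx hgx
      have h1 := hneg x hx
      rw [hw] at h1
      have h2 : w' (sref g x) = -x := h1
      rwa [sref_apply_of_inner_eq_zero g x hgx] at h2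
    have hind' : LinearIndependent ℝ γ' := hind.comp _ (Fin.castSucc_injective n)
    have hcardU : finrank ℝ U = n + 1 := by
      rw [hU, finrank_span_eq_card hind, Fintype.card_fin]
    have hcardU' : finrank ℝ U' = n := by
      rw [hU', finrank_span_eq_card hind', Fintype.card_fin]
    set f : V →ₗ[ℝ] ℝ := (innerSL ℝ g).toLinearMap with hf
    have hfapp : ∀ x, f x = ⟪g, x⟫ := fun x => rfl
    set W := U ⊓ LinearMap.ker f with hW
    have hWge : n ≤ finrank ℝ W := by
      have e1 := LinearMap.finrank_range_add_finrank_ker f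
      have e2 : finrank ℝ (LinearMap.range f) ≤ 1 := by
        have := Submodule.finrank_le (LinearMap.range f)
        simpa using this
      have e3 := Submodule.finrank_sup_add_finrank_inf_eq U (LinearMap.ker f)
      have e4 : finrank ℝ ((U ⊔ LinearMap.ker f : Submodule ℝ V) : Submodule ℝ V) ≤ finrank ℝ V :=
        Submodule.finrank_le _
      have e5 : finrank ℝ (LinearMap.ker f) ≤ finrank ℝ V := Submodule.finrank_le _
      rw [hW]
      omega
    have hWleU' : W ≤ U' := by
      intro x hx
      obtain ⟨hxU, hxK⟩ := hx
      have hgx : ⟪g, x⟫ = 0 := hxK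
      have hwx : w' x = -x := step1 x hxU hgx
      have hmem := prod_sub_mem_span γ' x
      rw [hwx] at hmem
      have : x = (-(2⁻¹ : ℝ)) • (-x - x) := by module
      rw [this]
      exact Submodule.smul_mem _ _ hmem
    have hWU' : W = U' := Submodule.eq_of_le_of_finrank_le hWleU' (by omega)
    have hγ'W : ∀ i : Fin n, γ' i ∈ W := by
      intro i
      rw [hWU']
      exact Submodule.subset_span (Set.mem_range_self i)
    have horth : ∀ i : Fin n, ⟪g, γ' i⟫ = 0 := fun i => (hγ'W i).2
    have hneg' : ∀ x ∈ U', ((List.ofFn fun i : Fin n => sref (γ' i)).prod : V ≃ₗ[ℝ] V) x = -x := by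
      intro x hx
      rw [← hWU'] at hx
      exact step1 x hx.1 hx.2
    have hpair := ih γ' (fun i => h0 i.castSucc) hneg' hind'
    intro i j hij
    rcases Fin.eq_castSucc_or_eq_last i with ⟨i', rfl⟩ | rfl
    · rcases Fin.eq_castSucc_or_eq_last j with ⟨j', rfl⟩ | rfl
      · exact hpair i' j' (fun hc => hij (by rw [hc]))
      · rw [real_inner_comm]; exact horth i'
    · rcases Fin.eq_castSucc_or_eq_last j with ⟨j', rfl⟩ | rfl
      · exact horth j'
      · exact absurd rfl hij

theorem statement0 {Δ : Set V} (hΔ : IsRootSystem Δ)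
    {d : ℕ} (γ : Fin d → V) (hγ : ∀ i, γ i ∈ Δ) :
    finrank ℝ (LinearMap.ker
        ((↑((List.ofFn fun i => sref (γ i)).prod : V ≃ₗ[ℝ] V) : V →ₗ[ℝ] V) + 1)) = d ↔
      ∀ i j, i ≠ j → ⟪γ i, γ j⟫ = 0 := by
  set w : V ≃ₗ[ℝ] V := (List.ofFn fun i => sref (γ i)).prod with hw
  set U := Submodule.span ℝ (Set.range γ) with hU
  have h0 : ∀ i, γ i ≠ 0 := fun i hc => hΔ.nonzero (hc ▸ hγ i)
  have hmemker : ∀ x, x ∈ LinearMap.ker ((↑w : V →ₗ[ℝ] V) + 1) ↔ w x = -x := by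
    intro x
    rw [LinearMap.mem_ker, LinearMap.add_apply, Module.End.one_apply, LinearEquiv.coe_coe,
      add_eq_zero_iff_eq_neg]
  have hkerle : LinearMap.ker ((↑w : V →ₗ[ℝ] V) + 1) ≤ U := by
    intro x hx
    rw [hmemker] at hx
    have hmem := prod_sub_mem_span γ x
    rw [← hw, hx] at hmem
    have : x = (-(2⁻¹ : ℝ)) • (-x - x) := by module
    rw [this]
    exact Submodule.smul_mem _ _ hmem
  constructor
  · intro hdim
    have hUled : finrank ℝ U ≤ d := by
      have := finrank_range_le_card (R := ℝ) γ
      rwa [Set.finrank, Fintype.card_fin] at this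
    have hkerU : LinearMap.ker ((↑w : V →ₗ[ℝ] V) + 1) = U :=
      Submodule.eq_of_le_of_finrank_le hkerle (by omega)
    have hneg : ∀ x ∈ U, w x = -x := by
      intro x hx
      rw [← hkerU] at hx
      exact (hmemker x).mp hx
    have hind : LinearIndependent ℝ γ := by
      rw [linearIndependent_iff_card_eq_finrank_span, Set.finrank, ← hU, Fintype.card_fin]
      rw [← hkerU, hdim]
    exact key_forward γ h0 hneg hind
  · intro horth
    have hind : LinearIndependent ℝ γ :=
      linearIndependent_of_ne_zero_of_inner_eq_zero h0 horth
    have hlist : (List.ofFn fun i => sref (γ i)) = (List.ofFn γ).map sref := by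
      rw [List.map_ofFn]; rfl
    have hnegroot : ∀ i, w (γ i) = -γ i := by
      intro i
      rw [hw, hlist]
      refine prod_map_sref_neg (List.ofFn γ) ?_ ?_ (γ i) ?_
      · rw [List.pairwise_ofFn]
        intro a b hab
        exact horth a b hab.ne
      · intro v hv
        obtain ⟨j, rfl⟩ := List.mem_ofFn.mp hv
        exact h0 j
      · exact List.mem_ofFn.mpr ⟨i, rfl⟩
    have hneg : ∀ x ∈ U, w x = -x := by
      intro x hx
      induction hx using Submodule.span_induction with
      | mem x h => obtain ⟨i, rfl⟩ := h; exact hnegroot i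
      | zero => simp
      | add x y _ _ hx hy => rw [map_add, hx, hy]; abel
      | smul c x _ hx => rw [map_smul, hx, smul_neg]
    have hkerU : LinearMap.ker ((↑w : V →ₗ[ℝ] V) + 1) = U := by
      refine le_antisymm hkerle ?_
      intro x hx
      rw [hmemker]
      exact hneg x hx
    rw [hkerU, hU, finrank_span_eq_card hind, Fintype.card_fin]
end

section
/- Let v, w be elements of a finite Weyl group W with v ≤ w in Bruhat order. If dim Ker(vw⁻¹ + 1) = l(w) − l(v), then (vw⁻¹)² = 1 and l_Δ(vw⁻¹) = l(w) − l(v). -/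
set_option linter.unusedSectionVars false

open scoped RealInnerProductSpace
open Module

variable {V : Type*} [NormedAddCommGroup V] [InnerProductSpace ℝ V] [FiniteDimensional ℝ V]

lemma sref_inv (γ : V) : (sref γ)⁻¹ = sref γ := by
  ext x
  rfl

lemma inner_sref (γ x y : V) : ⟪sref γ x, sref γ y⟫ = ⟪x, y⟫ := by
  rcases eq_or_ne γ 0 with h | h
  · simp [sref_apply, h]
  · have hγ : ⟪γ, γ⟫ ≠ 0 := fun hc => h (inner_self_eq_zero.mp hc)
    simp only [sref_apply, inner_sub_left, inner_sub_right, real_inner_smul_left,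
      real_inner_smul_right, real_inner_comm x γ]
    field_simp
    ring
lemma conj_sref (g : V ≃ₗ[ℝ] V) (hg : ∀ x y, ⟪g x, g y⟫ = ⟪x, y⟫) (γ : V) :
    g * sref γ * g⁻¹ = sref (g γ) := by
  ext x
  have h1 : (g * sref γ * g⁻¹) x = g (sref γ (g⁻¹ x)) := rfl
  have h2 : g ((g⁻¹ : V ≃ₗ[ℝ] V) x) = x := g.apply_symm_apply x
  have h3 : ⟪γ, (g⁻¹ : V ≃ₗ[ℝ] V) x⟫ = ⟪g γ, x⟫ := by rw [← hg γ]; rw [h2]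
  have h4 : ⟪γ, γ⟫ = ⟪g γ, g γ⟫ := (hg γ γ).symm
  rw [h1, sref_apply, sref_apply, map_sub, map_smul, h2, h3, h4]

lemma conj_prod (g : V ≃ₗ[ℝ] V) (hg : ∀ x y, ⟪g x, g y⟫ = ⟪x, y⟫) (L : List V) :
    g * (L.map sref).prod * g⁻¹ = ((L.map fun γ => g γ).map sref).prod := by
  induction L with
  | nil => simp
  | cons γ L ih =>
    simp only [List.map_cons, List.prod_cons]
    rw [show g * (sref γ * (L.map sref).prod) * g⁻¹
        = (g * sref γ * g⁻¹) * (g * (L.map sref).prod * g⁻¹) by group,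
      ih, conj_sref g hg]

lemma sublist_factor {n : ℕ} {α : Fin n → V} {Δ : Set V} (hΔ : IsRootSystem Δ)
    (hα : ∀ j, α j ∈ Δ) {l' l : List (Fin n)} (h : l'.Sublist l) :
    ∃ L : List V, (∀ γ ∈ L, γ ∈ Δ) ∧ L.length = l.length - l'.length ∧
      (l'.map fun j => sref (α j)).prod * ((l.map fun j => sref (α j)).prod)⁻¹
        = (L.map sref).prod := by
  induction h with
  | slnil => exact ⟨[], by simp, by simp, by simp⟩
  | @cons l' l a h ih =>
    obtain ⟨L, hL, hlen, heq⟩ := ih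
    refine ⟨L ++ [α a], ?_, ?_, ?_⟩
    · intro γ hγ
      rcases List.mem_append.mp hγ with h' | h'
      · exact hL γ h'
      · rw [List.mem_singleton.mp h']; exact hα a
    · have := h.length_le
      simp only [List.length_append, List.length_singleton, List.length_cons,
        List.length_nil, hlen]
      omega
    · simp only [List.map_cons, List.prod_cons, mul_inv_rev, sref_inv, List.map_append,
        List.prod_append, List.map_singleton, List.prod_singleton, List.map_nil,
        List.prod_nil, mul_one, ← heq]
      group
  | @cons_cons l' l a h ih =>
    obtain ⟨L, hL, hlen, heq⟩ := ih
    refine ⟨L.map (fun γ => sref (α a) γ), ?_, by simpa using hlen, ?_⟩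
    · intro γ hγ
      obtain ⟨β, hβ, rfl⟩ := List.mem_map.mp hγ
      exact hΔ.refl_mem _ (hα a) _ (hL β hβ)
    · rw [← conj_prod _ (inner_sref (α a)), ← heq]
      simp only [List.map_cons, List.prod_cons, mul_inv_rev, sref_inv]
      group
lemma range_add_le' (f g : V →ₗ[ℝ] V) :
    LinearMap.range (f + g) ≤ LinearMap.range f ⊔ LinearMap.range g := by
  rintro _ ⟨x, rfl⟩
  exact Submodule.add_mem_sup ⟨x, rfl⟩ ⟨x, rfl⟩

lemma rank_mul_sub_one (f g : V →ₗ[ℝ] V) :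
    finrank ℝ (LinearMap.range (f * g - 1)) ≤
      finrank ℝ (LinearMap.range (f - 1)) + finrank ℝ (LinearMap.range (g - 1)) := by
  have hfg : f * g - 1 = f ∘ₗ (g - 1) + (f - 1) := by
    ext x; simp [Module.End.mul_apply, LinearMap.sub_apply]
  calc finrank ℝ (LinearMap.range (f * g - 1))
      ≤ finrank ℝ ((LinearMap.range (f ∘ₗ (g - 1)) ⊔ LinearMap.range (f - 1) : Submodule ℝ V)) := by
        rw [hfg]; exact Submodule.finrank_mono (range_add_le' _ _)
    _ ≤ finrank ℝ (LinearMap.range (f ∘ₗ (g - 1))) + finrank ℝ (LinearMap.range (f - 1)) :=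
        Submodule.finrank_add_le_finrank_add_finrank _ _
    _ ≤ finrank ℝ (LinearMap.range (g - 1)) + finrank ℝ (LinearMap.range (f - 1)) := by
        gcongr
        rw [LinearMap.range_comp]
        exact Submodule.finrank_map_le _ _
    _ = _ := add_comm _ _

lemma rank_sref_sub_one (γ : V) :
    finrank ℝ (LinearMap.range ((sref γ : V →ₗ[ℝ] V) - 1)) ≤ 1 := by
  have hle : LinearMap.range ((sref γ : V →ₗ[ℝ] V) - 1) ≤ ℝ ∙ γ := by
    rintro _ ⟨x, rfl⟩
    have : ((sref γ : V →ₗ[ℝ] V) - 1) x = (-(2 * ⟪γ, x⟫ / ⟪γ, γ⟫)) • γ := by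
      simp only [LinearMap.sub_apply, Module.End.one_apply, LinearEquiv.coe_coe, sref_apply]
      module
    rw [this]
    exact Submodule.smul_mem _ _ (Submodule.mem_span_singleton_self γ)
  calc finrank ℝ (LinearMap.range ((sref γ : V →ₗ[ℝ] V) - 1))
      ≤ finrank ℝ (ℝ ∙ γ) := Submodule.finrank_mono hle
    _ ≤ 1 := by
        simpa using finrank_span_le_card ({γ} : Set V)

lemma rank_list_prod_sub_one (L : List V) :
    finrank ℝ (LinearMap.range ((((L.map sref).prod : V ≃ₗ[ℝ] V) : V →ₗ[ℝ] V) - 1)) ≤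
      L.length := by
  induction L with
  | nil =>
    simp only [List.map_nil, List.prod_nil, LinearEquiv.coe_toLinearMap_one, List.length_nil,
      ← Module.End.one_eq_id, sub_self, LinearMap.range_zero, le_refl]
    simp
    exact LinearMap.range_eq_bot.mpr (sub_self (1 : V →ₗ[ℝ] V))
  | cons γ L ih =>
    simp only [List.map_cons, List.prod_cons, LinearEquiv.coe_toLinearMap_mul,
      List.length_cons]
    calc finrank ℝ (LinearMap.range
          ((sref γ : V →ₗ[ℝ] V) * (((L.map sref).prod : V ≃ₗ[ℝ] V) : V →ₗ[ℝ] V) - 1))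
        ≤ finrank ℝ (LinearMap.range ((sref γ : V →ₗ[ℝ] V) - 1)) +
          finrank ℝ (LinearMap.range ((((L.map sref).prod : V ≃ₗ[ℝ] V) : V →ₗ[ℝ] V) - 1)) :=
          rank_mul_sub_one _ _
      _ ≤ 1 + L.length := add_le_add (rank_sref_sub_one γ) ih
      _ = L.length + 1 := add_comm _ _
theorem statement5 {Δ Pos : Set V} {n : ℕ} {α : Fin n → V}
    (hΔ : IsRootSystem Δ) (hb : IsBase Δ Pos α)
    (v w : V ≃ₗ[ℝ] V) (hvw : bruhatLE α v w)
    (hker : finrank ℝ (LinearMap.ker ((↑(v * w⁻¹) : V →ₗ[ℝ] V) + 1)) =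
      len α w - len α v) :
    (v * w⁻¹) ^ 2 = 1 ∧ reflLength Δ (v * w⁻¹) = len α w - len α v := by
  obtain ⟨l, hlw, hllen, l', hsub, hl'v⟩ := hvw
  have hαΔ : ∀ j, α j ∈ Δ := fun j => hb.pos_subset (hb.simple_mem j)
  obtain ⟨L, hLΔ, hLlen, hLeq⟩ := sublist_factor hΔ hαΔ hsub
  set x : V ≃ₗ[ℝ] V := v * w⁻¹ with hx
  have hxL : x = (L.map sref).prod := by
    rw [hx, ← hl'v, ← hlw]
    exact hLeq
  have hlv_le : len α v ≤ l'.length := Nat.sInf_le ⟨l', hl'v, rfl⟩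
  set d := len α w - len α v with hd
  have hk : L.length ≤ d := by
    rw [hLlen, hllen] at *
    omega
  set X : V →ₗ[ℝ] V := (↑(v * w⁻¹) : V →ₗ[ℝ] V) with hX
  have hker_le : LinearMap.ker (X + 1) ≤ LinearMap.range (X - 1) := by
    intro u hu
    have h0 : X u + u = 0 := by simpa using hu
    have hXu : X u = -u := eq_neg_of_add_eq_zero_left h0
    refine ⟨(-(2:ℝ)⁻¹) • u, ?_⟩
    rw [LinearMap.sub_apply, map_smul, hXu, Module.End.one_apply]
    module
  -- rank bound for any reflection factorization
  have key : ∀ M : List V, x = (M.map sref).prod →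
      finrank ℝ (LinearMap.range (X - 1)) ≤ M.length := by
    intro M hM
    have := rank_list_prod_sub_one (V := V) M
    rw [← hM] at this
    exact this
  have h1 : d ≤ finrank ℝ (LinearMap.range (X - 1)) :=
    hker ▸ Submodule.finrank_mono hker_le
  have hrd : finrank ℝ (LinearMap.range (X - 1)) = d :=
    le_antisymm ((key L hxL).trans hk) h1
  have heq : LinearMap.ker (X + 1) = LinearMap.range (X - 1) :=
    Submodule.eq_of_le_of_finrank_le hker_le (by rw [hrd, hker])
  have hsq : x ^ 2 = 1 := by
    rw [pow_two]
    apply LinearEquiv.toLinearMap_injective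
    apply LinearMap.ext
    intro u
    have hmem : (X - 1) u ∈ LinearMap.ker (X + 1) := heq ▸ LinearMap.mem_range_self _ u
    have h0 : (X + 1) ((X - 1) u) = 0 := hmem
    have h2 : X (X u) = u := by
      have h5 : X (X u) + X u - (X u + u) = 0 := by
        simpa only [LinearMap.add_apply, LinearMap.sub_apply, Module.End.one_apply,
          map_sub] using h0
      have h3 : X (X u) - u = 0 := by
        calc X (X u) - u = X (X u) + X u - (X u + u) := by abel
        _ = 0 := h5
      exact sub_eq_zero.mp h3
    show (x * x) u = (1 : V ≃ₗ[ℝ] V) u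
    have : (x * x) u = X (X u) := rfl
    rw [this, h2]
    rfl
  refine ⟨hsq, ?_⟩
  have hmemS : L.length ∈ {r | ∃ γ : Fin r → V, (∀ i, γ i ∈ Δ) ∧
      x = (List.ofFn fun i => sref (γ i)).prod} := by
    refine ⟨L.get, fun i => hLΔ _ (L.get_mem _), ?_⟩
    rw [hxL]
    congr 1
    conv_lhs => rw [← List.ofFn_get L]
    rw [List.map_ofFn]
    rfl
  have hlow : ∀ r ∈ {r | ∃ γ : Fin r → V, (∀ i, γ i ∈ Δ) ∧
      x = (List.ofFn fun i => sref (γ i)).prod}, d ≤ r := by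
    rintro r ⟨γ, hγΔ, hγ⟩
    have hM : x = ((List.ofFn γ).map sref).prod := by
      rw [hγ, List.map_ofFn]
      rfl
    have := key (List.ofFn γ) hM
    rw [List.length_ofFn] at this
    omega
  show reflLength Δ x = d
  apply le_antisymm
  · exact (Nat.sInf_le hmemS).trans hk
  · exact hlow _ (Nat.sInf_mem ⟨L.length, hmemS⟩)
end

section
/- Let v, w be elements of a finite Weyl group W with v ≤ w, and suppose v = s_{γ₁}⋯s_{γ_d} w for pairwise orthogonal positive roots γ₁, …, γ_d with d = l(w) − l(v). Then (vw⁻¹)² = 1 and l_Δ(vw⁻¹) = l(w) − l(v). -/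
set_option linter.unusedSectionVars false

open scoped RealInnerProductSpace
open Module

variable {V : Type*} [NormedAddCommGroup V] [InnerProductSpace ℝ V] [FiniteDimensional ℝ V]

lemma mul_apply' (f g : V ≃ₗ[ℝ] V) (x : V) : (f * g) x = f (g x) := rfl

lemma inner_listsum_zero (a : V) (L : List V) (f : V → ℝ)
    (h : ∀ b ∈ L, ⟪a, b⟫ = 0) :
    ⟪a, (L.map fun b => f b • b).sum⟫ = 0 := by
  induction L with
  | nil => simp
  | cons b L ih =>
    simp only [List.map_cons, List.sum_cons, inner_add_right, real_inner_smul_right,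
      h b List.mem_cons_self, mul_zero, zero_add]
    exact ih fun c hc => h c (List.mem_cons_of_mem _ hc)

lemma prodSref_apply (L : List V) (hL : L.Pairwise fun a b => ⟪a, b⟫ = 0) (x : V) :
    ((L.map sref).prod) x = x - (L.map fun a => (2 * ⟪a, x⟫ / ⟪a, a⟫) • a).sum := by
  induction L with
  | nil => simp
  | cons a L ih =>
    rw [List.pairwise_cons] at hL
    simp only [List.map_cons, List.prod_cons, List.sum_cons]
    rw [mul_apply', ih hL.2, sref_apply, inner_sub_right,
      inner_listsum_zero a L _ hL.1, sub_zero]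
    abel

lemma prodSref_ofFn {d : ℕ} (γ : Fin d → V) (horth : ∀ i j, i ≠ j → ⟪γ i, γ j⟫ = 0)
    (x : V) :
    ((List.ofFn fun i => sref (γ i)).prod) x
      = x - ∑ i, (2 * ⟪γ i, x⟫ / ⟪γ i, γ i⟫) • γ i := by
  have h1 : (List.ofFn fun i => sref (γ i)) = (List.ofFn γ).map sref := by
    rw [List.map_ofFn]; rfl
  rw [h1, prodSref_apply _ (by
    rw [List.pairwise_ofFn]
    exact fun i j hij => horth i j (Fin.ne_of_lt hij))]
  congr 1
  rw [List.map_ofFn, List.sum_ofFn]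
  rfl

lemma prodSref_sub_mem (L : List V) (x : V) :
    ((L.map sref).prod) x - x ∈ Submodule.span ℝ {a | a ∈ L} := by
  induction L with
  | nil => simp
  | cons a L ih =>
    simp only [List.map_cons, List.prod_cons]
    set y := ((L.map sref).prod) x with hy
    have h1 : sref a y - y ∈ Submodule.span ℝ {b | b ∈ a :: L} := by
      rw [sref_apply]
      have : y - (2 * ⟪a, y⟫ / ⟪a, a⟫) • a - y = (-(2 * ⟪a, y⟫ / ⟪a, a⟫)) • a := by
        rw [neg_smul]; abel
      rw [this]
      exact Submodule.smul_mem _ _ (Submodule.subset_span (by simp))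
    have h2 : y - x ∈ Submodule.span ℝ {b | b ∈ a :: L} :=
      Submodule.span_mono (fun b hb => List.mem_cons_of_mem _ hb) ih
    have := add_mem h1 h2
    rw [mul_apply']
    convert this using 1
    abel

theorem statement6 {Δ Pos : Set V} {n : ℕ} {α : Fin n → V}
    (hΔ : IsRootSystem Δ) (hb : IsBase Δ Pos α)
    (v w : V ≃ₗ[ℝ] V) (hvw : bruhatLE α v w)
    {d : ℕ} (hd : d = len α w - len α v)
    (γ : Fin d → V) (hγ : ∀ i, γ i ∈ Pos)
    (horth : ∀ i j, i ≠ j → ⟪γ i, γ j⟫ = 0)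
    (hprod : v = (List.ofFn fun i => sref (γ i)).prod * w) :
    (v * w⁻¹) ^ 2 = 1 ∧ reflLength Δ (v * w⁻¹) = len α w - len α v := by
  have hΔmem : ∀ i, γ i ∈ Δ := fun i => hb.pos_subset (hγ i)
  have hne : ∀ i, γ i ≠ 0 := fun i h => hΔ.nonzero (h ▸ hΔmem i)
  have hip : ∀ i, ⟪γ i, γ i⟫ ≠ 0 := fun i h => hne i (inner_self_eq_zero.mp h)
  have hu : v * w⁻¹ = (List.ofFn fun i => sref (γ i)).prod := by
    rw [hprod]; group
  set P := (List.ofFn fun i => sref (γ i)).prod with hP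
  -- key inner product computation
  have key : ∀ (x : V) (i : Fin d),
      2 * ⟪γ i, x - ∑ j, (2 * ⟪γ j, x⟫ / ⟪γ j, γ j⟫) • γ j⟫ / ⟪γ i, γ i⟫
        = -(2 * ⟪γ i, x⟫ / ⟪γ i, γ i⟫) := by
    intro x i
    rw [inner_sub_right, inner_sum]
    simp_rw [real_inner_smul_right]
    rw [Finset.sum_eq_single i
      (fun j _ hj => by rw [horth i j (Ne.symm hj), mul_zero])
      (by simp)]
    rw [div_mul_cancel₀ _ (hip i)]
    ring
  have hsq : ∀ x : V, P (P x) = x := by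
    intro x
    rw [prodSref_ofFn γ horth x, prodSref_ofFn γ horth]
    simp_rw [key x]
    simp only [neg_smul, Finset.sum_neg_distrib]
    abel
  constructor
  · rw [sq, hu]
    refine LinearEquiv.ext fun x => ?_
    rw [mul_apply']
    exact hsq x
  · rw [← hd, reflLength, hu]
    have hmem : d ∈ {r | ∃ δ : Fin r → V, (∀ i, δ i ∈ Δ) ∧
        P = (List.ofFn fun i => sref (δ i)).prod} := ⟨γ, hΔmem, rfl⟩
    have hlb : ∀ r ∈ {r | ∃ δ : Fin r → V, (∀ i, δ i ∈ Δ) ∧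
        P = (List.ofFn fun i => sref (δ i)).prod}, d ≤ r := by
      rintro r ⟨δ, hδ, hr⟩
      have hli : LinearIndependent ℝ γ :=
        linearIndependent_of_ne_zero_of_inner_eq_zero hne horth
    -- each γ j lies in the span of the δ's
      have hmemspan : ∀ j, γ j ∈ Submodule.span ℝ (Set.range δ) := by
        intro j
        have hform : P (γ j) - γ j = -((2 : ℝ) • γ j) := by
          rw [prodSref_ofFn γ horth]
          have hsum : ∑ i, (2 * ⟪γ i, γ j⟫ / ⟪γ i, γ i⟫) • γ i = (2 : ℝ) • γ j := by
            rw [Finset.sum_eq_single j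
              (fun i _ hi => by rw [horth i j hi, mul_zero, zero_div, zero_smul])
              (by simp)]
            rw [mul_div_assoc, div_self (hip j), mul_one]
          rw [hsum]; abel
        have hP2 : P (γ j) - γ j ∈ Submodule.span ℝ (Set.range δ) := by
          have hlist : (List.ofFn fun i => sref (δ i)) = (List.ofFn δ).map sref := by
            rw [List.map_ofFn]; rfl
          have := prodSref_sub_mem (List.ofFn δ) (γ j)
          rw [← hlist, ← hr] at this
          convert this using 2
          ext b
          simp [List.mem_ofFn, Set.mem_range, eq_comm]
        rw [hform] at hP2
        have := Submodule.smul_mem _ (-(1/2) : ℝ) hP2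
        simpa using this
      have hspanle : Submodule.span ℝ (Set.range γ) ≤ Submodule.span ℝ (Set.range δ) := by
        rw [Submodule.span_le]
        rintro _ ⟨j, rfl⟩
        exact hmemspan j
      have h1 : finrank ℝ (Submodule.span ℝ (Set.range γ)) = d := by
        rw [finrank_span_eq_card hli, Fintype.card_fin]
      have h2 : finrank ℝ (Submodule.span ℝ (Set.range δ)) ≤ r := by
        have := finrank_range_le_card (R := ℝ) δ
        simpa [Set.finrank] using this
      calc d = finrank ℝ (Submodule.span ℝ (Set.range γ)) := h1.symm
        _ ≤ finrank ℝ (Submodule.span ℝ (Set.range δ)) := Submodule.finrank_mono hspanle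
        _ ≤ r := h2
    exact le_antisymm (Nat.sInf_le hmem) (hlb _ (Nat.sInf_mem ⟨d, hmem⟩))
end

section
/- Let (v,w) be a pair in a finite Weyl group with v ≤ w such that dim Ker(vw⁻¹ + 1) = l(w) − l(v), and let v ≤ v' ≤ w' ≤ w. Then dim Ker(v'(w')⁻¹ + 1) = l(w') − l(v'). -/
set_option linter.unusedSectionVars false

open scoped RealInnerProductSpace
open Module

variable {V : Type*} [NormedAddCommGroup V] [InnerProductSpace ℝ V] [FiniteDimensional ℝ V]

/-- dimension of the fixed space of `u`. -/
noncomputable def fdim (u : V ≃ₗ[ℝ] V) : ℕ :=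
  finrank ℝ (LinearMap.ker ((↑u : V →ₗ[ℝ] V) - 1))

/-- dimension of the `-1`-eigenspace of `u`. -/
noncomputable def ddim (u : V ≃ₗ[ℝ] V) : ℕ :=
  finrank ℝ (LinearMap.ker ((↑u : V →ₗ[ℝ] V) + 1))

lemma mem_fker {u : V ≃ₗ[ℝ] V} {x : V} :
    x ∈ LinearMap.ker ((↑u : V →ₗ[ℝ] V) - 1) ↔ u x = x := by
  simp [LinearMap.mem_ker, sub_eq_zero]

lemma mem_dker {u : V ≃ₗ[ℝ] V} {x : V} :
    x ∈ LinearMap.ker ((↑u : V →ₗ[ℝ] V) + 1) ↔ u x = -x := by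
  simp [LinearMap.mem_ker, add_eq_zero_iff_eq_neg]

lemma fdim_le (u : V ≃ₗ[ℝ] V) : fdim u ≤ finrank ℝ V :=
  Submodule.finrank_le _

lemma ddim_add_fdim_le (u : V ≃ₗ[ℝ] V) : ddim u + fdim u ≤ finrank ℝ V := by
  have hinf : LinearMap.ker ((↑u : V →ₗ[ℝ] V) + 1) ⊓ LinearMap.ker ((↑u : V →ₗ[ℝ] V) - 1) = ⊥ := by
    rw [eq_bot_iff]
    intro x hx
    rw [Submodule.mem_inf] at hx
    obtain ⟨hx1, hx2⟩ := hx
    rw [Submodule.mem_bot]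
    rw [mem_dker] at hx1
    rw [mem_fker] at hx2
    have h2 : (2 : ℝ) • x = 0 := by
      rw [two_smul]
      rw [hx1] at hx2
      linear_combination (norm := module) -hx2
    have := smul_eq_zero.mp h2
    simpa using this
  have := Submodule.finrank_sup_add_finrank_inf_eq
    (LinearMap.ker ((↑u : V →ₗ[ℝ] V) + 1)) (LinearMap.ker ((↑u : V →ₗ[ℝ] V) - 1))
  rw [hinf] at this
  simp only [finrank_bot, add_zero] at this
  rw [ddim, fdim, ← this]
  exact Submodule.finrank_le _

lemma fdim_subadd (a b : V ≃ₗ[ℝ] V) :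
    fdim a + fdim b ≤ finrank ℝ V + fdim (a * b) := by
  have hle : LinearMap.ker ((↑a : V →ₗ[ℝ] V) - 1) ⊓ LinearMap.ker ((↑b : V →ₗ[ℝ] V) - 1) ≤
      LinearMap.ker ((↑(a * b) : V →ₗ[ℝ] V) - 1) := by
    intro x hx
    rw [Submodule.mem_inf] at hx
    obtain ⟨hx1, hx2⟩ := hx
    rw [mem_fker] at hx1 hx2 ⊢
    show a (b x) = x
    rw [hx2, hx1]
  have heq := Submodule.finrank_sup_add_finrank_inf_eq
    (LinearMap.ker ((↑a : V →ₗ[ℝ] V) - 1)) (LinearMap.ker ((↑b : V →ₗ[ℝ] V) - 1))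
  have h1 : finrank ℝ ↥(LinearMap.ker ((↑a : V →ₗ[ℝ] V) - 1) ⊔
      LinearMap.ker ((↑b : V →ₗ[ℝ] V) - 1)) ≤ finrank ℝ V := Submodule.finrank_le _
  have h2 := Submodule.finrank_mono hle
  rw [fdim, fdim, fdim, ← heq]
  omega

lemma fdim_conj (g u : V ≃ₗ[ℝ] V) : fdim (g * u * g⁻¹) = fdim u := by
  have hker : LinearMap.ker ((↑(g * u * g⁻¹) : V →ₗ[ℝ] V) - 1) =
      (LinearMap.ker ((↑u : V →ₗ[ℝ] V) - 1)).map (g : V →ₗ[ℝ] V) := by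
    ext y
    rw [Submodule.mem_map_equiv]
    simp only [LinearMap.mem_ker, LinearMap.sub_apply, Module.End.one_apply, LinearEquiv.coe_coe,
      sub_eq_zero]
    show g (u (g.symm y)) = y ↔ u (g.symm y) = g.symm y
    exact (LinearEquiv.eq_symm_apply g).symm
  rw [fdim, fdim, hker, LinearEquiv.finrank_map_eq]

lemma sref_mul_self (γ : V) : sref γ * sref γ = 1 := by
  ext x
  exact srefl_involutive γ x

lemma fdim_sref (γ : V) : finrank ℝ V ≤ fdim (sref γ) + 1 := by
  have hle : (ℝ ∙ γ)ᗮ ≤ LinearMap.ker ((↑(sref γ) : V →ₗ[ℝ] V) - 1) := by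
    intro x hx
    rw [Submodule.mem_orthogonal_singleton_iff_inner_right] at hx
    rw [mem_fker]
    show srefl γ x = x
    rw [srefl_apply, hx]
    simp
  have h1 := Submodule.finrank_mono hle
  have h2 := Submodule.finrank_add_finrank_orthogonal (K := (ℝ ∙ γ))
  have h3 : finrank ℝ (ℝ ∙ γ) ≤ 1 := by
    rcases eq_or_ne γ 0 with h | h
    · rw [h, Submodule.span_zero_singleton, finrank_bot]
      omega
    · rw [finrank_span_singleton h]
  rw [fdim]
  omega

lemma fdim_one : fdim (1 : V ≃ₗ[ℝ] V) = finrank ℝ V := by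
  have : LinearMap.ker ((↑(1 : V ≃ₗ[ℝ] V) : V →ₗ[ℝ] V) - 1) = ⊤ := by
    ext x
    simp [mem_fker]
  rw [fdim, this, finrank_top]

lemma sublist_bound {n : ℕ} (α : Fin n → V) {l' l : List (Fin n)} (hsub : l'.Sublist l) :
    finrank ℝ V + l'.length ≤
      fdim ((l'.map fun j => sref (α j)).prod * ((l.map fun j => sref (α j)).prod)⁻¹) +
        l.length := by
  induction hsub with
  | slnil => simp [fdim_one]
  | @cons l' l a hsub ih =>
      have key : (l'.map fun j => sref (α j)).prod * (((a :: l).map fun j => sref (α j)).prod)⁻¹ =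
          ((l'.map fun j => sref (α j)).prod * ((l.map fun j => sref (α j)).prod)⁻¹) *
            (sref (α a)) := by
      
        rw [List.map_cons, List.prod_cons, mul_inv_rev, sref_inv, mul_assoc]
      rw [key]
      have hs := fdim_subadd ((l'.map fun j => sref (α j)).prod * ((l.map fun j => sref (α j)).prod)⁻¹) (sref (α a))
      have hr := fdim_sref (α a)
      simp only [List.length_cons]
      omega
  | @cons_cons l' l a hsub ih =>
      have key : ((a :: l').map fun j => sref (α j)).prod *
          (((a :: l).map fun j => sref (α j)).prod)⁻¹ =
          sref (α a) * ((l'.map fun j => sref (α j)).prod * ((l.map fun j => sref (α j)).prod)⁻¹)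
            * (sref (α a))⁻¹ := by
        rw [List.map_cons, List.prod_cons, List.map_cons, List.prod_cons, mul_inv_rev]
        group
      rw [key, fdim_conj]
      simp only [List.length_cons]
      omega

lemma bruhat_bound {n : ℕ} {α : Fin n → V} {v w : V ≃ₗ[ℝ] V} (h : bruhatLE α v w) :
    len α v ≤ len α w ∧ finrank ℝ V + len α v ≤ fdim (v * w⁻¹) + len α w := by
  obtain ⟨l, hw, hlen, l', hsub, hv⟩ := h
  have hw' : (l.map fun j => sref (α j)).prod = w := hw
  have hv' : (l'.map fun j => sref (α j)).prod = v := hv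
  have h1 : len α v ≤ l'.length := Nat.sInf_le ⟨l', hv, rfl⟩
  have h2 := sublist_bound α hsub
  rw [hw', hv'] at h2
  have h3 := hsub.length_le
  omega

lemma extract_right (g h : V ≃ₗ[ℝ] V)
    (e1 : ddim (g * h) + fdim (g * h) = finrank ℝ V)
    (e2 : fdim g + fdim h = finrank ℝ V + fdim (g * h)) :
    ddim h + fdim h = finrank ℝ V := by
  have hle : LinearMap.ker ((↑(g * h) : V →ₗ[ℝ] V) + 1) ⊓ LinearMap.ker ((↑g : V →ₗ[ℝ] V) - 1) ≤
      LinearMap.ker ((↑h : V →ₗ[ℝ] V) + 1) := by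
    intro x hx
    rw [Submodule.mem_inf] at hx
    obtain ⟨hx1, hx2⟩ := hx
    rw [mem_dker] at hx1 ⊢
    rw [mem_fker] at hx2
    apply g.injective
    rw [map_neg, hx2]
    exact hx1
  have heq : finrank ℝ ↥(LinearMap.ker ((↑(g * h) : V →ₗ[ℝ] V) + 1) ⊔
        LinearMap.ker ((↑g : V →ₗ[ℝ] V) - 1)) +
      finrank ℝ ↥(LinearMap.ker ((↑(g * h) : V →ₗ[ℝ] V) + 1) ⊓
        LinearMap.ker ((↑g : V →ₗ[ℝ] V) - 1)) = ddim (g * h) + fdim g :=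
    Submodule.finrank_sup_add_finrank_inf_eq _ _
  have hs : finrank ℝ ↥(LinearMap.ker ((↑(g * h) : V →ₗ[ℝ] V) + 1) ⊔
      LinearMap.ker ((↑g : V →ₗ[ℝ] V) - 1)) ≤ finrank ℝ V := Submodule.finrank_le _
  have hi : finrank ℝ ↥(LinearMap.ker ((↑(g * h) : V →ₗ[ℝ] V) + 1) ⊓
      LinearMap.ker ((↑g : V →ₗ[ℝ] V) - 1)) ≤ ddim h := Submodule.finrank_mono hle
  have hb := ddim_add_fdim_le h
  have hf := fdim_le h
  omega

lemma extract_left (g h : V ≃ₗ[ℝ] V)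
    (e1 : ddim (g * h) + fdim (g * h) = finrank ℝ V)
    (e2 : fdim g + fdim h = finrank ℝ V + fdim (g * h)) :
    ddim g + fdim g = finrank ℝ V := by
  have hle : LinearMap.ker ((↑(g * h) : V →ₗ[ℝ] V) + 1) ⊓ LinearMap.ker ((↑h : V →ₗ[ℝ] V) - 1) ≤
      LinearMap.ker ((↑g : V →ₗ[ℝ] V) + 1) := by
    intro x hx
    rw [Submodule.mem_inf] at hx
    obtain ⟨hx1, hx2⟩ := hx
    rw [mem_dker] at hx1 ⊢
    rw [mem_fker] at hx2
    have : g (h x) = -x := hx1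
    rw [hx2] at this
    exact this
  have heq : finrank ℝ ↥(LinearMap.ker ((↑(g * h) : V →ₗ[ℝ] V) + 1) ⊔
        LinearMap.ker ((↑h : V →ₗ[ℝ] V) - 1)) +
      finrank ℝ ↥(LinearMap.ker ((↑(g * h) : V →ₗ[ℝ] V) + 1) ⊓
        LinearMap.ker ((↑h : V →ₗ[ℝ] V) - 1)) = ddim (g * h) + fdim h :=
    Submodule.finrank_sup_add_finrank_inf_eq _ _
  have hs : finrank ℝ ↥(LinearMap.ker ((↑(g * h) : V →ₗ[ℝ] V) + 1) ⊔
      LinearMap.ker ((↑h : V →ₗ[ℝ] V) - 1)) ≤ finrank ℝ V := Submodule.finrank_le _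
  have hi : finrank ℝ ↥(LinearMap.ker ((↑(g * h) : V →ₗ[ℝ] V) + 1) ⊓
      LinearMap.ker ((↑h : V →ₗ[ℝ] V) - 1)) ≤ ddim g := Submodule.finrank_mono hle
  have hb := ddim_add_fdim_le g
  have hf := fdim_le g
  omega


theorem statement11 {Δ Pos : Set V} {n : ℕ} {α : Fin n → V}
    (hΔ : IsRootSystem Δ) (hb : IsBase Δ Pos α)
    (v v' w' w : V ≃ₗ[ℝ] V)
    (h1 : bruhatLE α v v') (h2 : bruhatLE α v' w') (h3 : bruhatLE α w' w)
    (hker : finrank ℝ (LinearMap.ker ((↑(v * w⁻¹) : V →ₗ[ℝ] V) + 1)) =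
      len α w - len α v) :
    finrank ℝ (LinearMap.ker ((↑(v' * w'⁻¹) : V →ₗ[ℝ] V) + 1)) =
      len α w' - len α v' := by
  obtain ⟨o1, b1⟩ := bruhat_bound h1
  obtain ⟨o2, b2⟩ := bruhat_bound h2
  obtain ⟨o3, b3⟩ := bruhat_bound h3
  have hAD : (v * v'⁻¹) * (v' * w⁻¹) = v * w⁻¹ := by group
  have hBC : (v' * w'⁻¹) * (w' * w⁻¹) = v' * w⁻¹ := by group
  have s1 := fdim_subadd (v * v'⁻¹) (v' * w⁻¹)
  rw [hAD] at s1
  have s2 := fdim_subadd (v' * w'⁻¹) (w' * w⁻¹)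
  rw [hBC] at s2
  have t1 := ddim_add_fdim_le (v * w⁻¹)
  have hker' : ddim (v * w⁻¹) = len α w - len α v := hker
  have E1 : ddim (v * w⁻¹) + fdim (v * w⁻¹) = finrank ℝ V := by omega
  have E2 : fdim (v * v'⁻¹) + fdim (v' * w⁻¹) = finrank ℝ V + fdim (v * w⁻¹) := by omega
  have F1 : ddim (v' * w⁻¹) + fdim (v' * w⁻¹) = finrank ℝ V :=
    extract_right (v * v'⁻¹) (v' * w⁻¹) (by rw [hAD]; exact E1) (by rw [hAD]; exact E2)
  have E3 : fdim (v' * w'⁻¹) + fdim (w' * w⁻¹) = finrank ℝ V + fdim (v' * w⁻¹) := by omega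
  have F2 : ddim (v' * w'⁻¹) + fdim (v' * w'⁻¹) = finrank ℝ V :=
    extract_left (v' * w'⁻¹) (w' * w⁻¹) (by rw [hBC]; exact F1) (by rw [hBC]; exact E3)
  have E4 : fdim (v' * w'⁻¹) + len α w' = finrank ℝ V + len α v' := by omega
  show ddim (v' * w'⁻¹) = len α w' - len α v'
  omega
end
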